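/- In the Majority cross-validation model with n, k, m, P, X_i, Y_{−i}, L̂_i as in the context, the covariance between the first two fold losses satisfies: E[L̂₁·L̂₂] − E[L̂₁]·E[L̂₂] = 4 · Σ_{y=0}^{n−2m} 2^{−(n−2m)}·binom(n−2m, y) · ( Σ_{x=0}^{m} 2^{−m}·binom(m, x)·(x/m)·1{x > (n−m)/2 − y} − ( Σ_{x=0}^{m} 2^{−m}·binom(m, x)·(x/m) ) · ( Σ_{x=0}^{m} 2^{−m}·binom(m, x)·1{x > (n−m)/2 − y} ) )². That is, Cov(L̂₁, L̂₂) = 4·E_Y[ Cov(X/m, 1{X > (n−m)/2 − Y} | Y)² ] where X ∼ Bin(m, 1/2) and Y ∼ Bin(n−2m, 1/2) are independent. -/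

import Mathlib

open Finset

/-- Fold `i` (for `1 ≤ i ≤ k`) consists of the indices `{(i-1)·m, …, i·m - 1}`. -/
def cvFold (n m i : ℕ) : Finset (Fin n) :=
  Finset.univ.filter fun j => (i - 1) * m ≤ (j : ℕ) ∧ (j : ℕ) < i * m

/-- `X_i(ω)`: number of 1-labels inside cvFold `i`. -/
def Xc (n m i : ℕ) (ω : Fin n → Bool) : ℕ :=
  ((cvFold n m i).filter fun j => ω j = true).card

/-- `Y_{-i}(ω)`: number of 1-labels outside cvFold `i`. -/
def Yc (n m i : ℕ) (ω : Fin n → Bool) : ℕ :=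
  ((Finset.univ \ cvFold n m i).filter fun j => ω j = true).card

/-- Hold-out error on cvFold `i` of the Majority algorithm trained on the complement of
cvFold `i`: it predicts the constant label `1` iff `Y_{-i} > (n-m)/2`, so the hold-out
error is `(X_i/m)·1{Y_{-i} ≤ (n-m)/2} + ((m-X_i)/m)·1{Y_{-i} > (n-m)/2}`. -/
noncomputable def Lhat (n m i : ℕ) (ω : Fin n → Bool) : ℝ :=
  if ((n : ℝ) - m) / 2 < (Yc n m i ω : ℝ) then ((m : ℝ) - Xc n m i ω) / m
  else (Xc n m i ω : ℝ) / m

/-- Expectation with respect to the uniform probability measure on `Fin n → Bool`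
(i.e. `n` i.i.d. fair-coin binary labels). -/
noncomputable def expec (n : ℕ) (f : (Fin n → Bool) → ℝ) : ℝ :=
  (∑ ω : Fin n → Bool, f ω) / 2 ^ n

/-! ### Auxiliary definitions -/

/-- Number of 1-labels in the "rest" block `{2m, …, n-1}`. -/
def Zc (n m : ℕ) (ω : Fin n → Bool) : ℕ :=
  (Finset.univ.filter fun j : Fin n => 2 * m ≤ (j : ℕ) ∧ ω j = true).card

/-- Number of `true` values of a Boolean vector. -/
def cnt {m : ℕ} (a : Fin m → Bool) : ℕ := (Finset.univ.filter fun i => a i = true).card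

noncomputable def W (m x : ℕ) : ℝ := (2 : ℝ)⁻¹ ^ m * (m.choose x : ℝ)

noncomputable def ff (m : ℕ) (t : ℝ) (x y : ℕ) : ℝ :=
  if t < (y : ℝ) then ((m : ℝ) - x) / m else (x : ℝ) / m

lemma Lhat_eq (n m i : ℕ) (ω : Fin n → Bool) :
    Lhat n m i ω = ff m (((n : ℝ) - m) / 2) (Xc n m i ω) (Yc n m i ω) := rfl

lemma Yc_one (n m : ℕ) (ω : Fin n → Bool) : Yc n m 1 ω = Xc n m 2 ω + Zc n m ω := by
  unfold Yc Xc Zc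
  rw [sdiff_eq_filter, filter_filter]
  unfold cvFold
  rw [filter_filter]
  rw [Finset.card_filter, Finset.card_filter, Finset.card_filter, ← Finset.sum_add_distrib]
  refine Finset.sum_congr rfl fun j _ => ?_
  simp only [Finset.mem_filter, Finset.mem_univ, true_and, not_and, not_lt]
  by_cases hω : ω j = true <;> simp [hω] <;> split_ifs <;> omega

lemma Yc_two (n m : ℕ) (ω : Fin n → Bool) : Yc n m 2 ω = Xc n m 1 ω + Zc n m ω := by
  unfold Yc Xc Zc
  rw [sdiff_eq_filter, filter_filter]
  unfold cvFold
  rw [filter_filter]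
  rw [Finset.card_filter, Finset.card_filter, Finset.card_filter, ← Finset.sum_add_distrib]
  refine Finset.sum_congr rfl fun j _ => ?_
  simp only [Finset.mem_filter, Finset.mem_univ, true_and, not_and, not_lt]
  by_cases hω : ω j = true <;> simp [hω] <;> split_ifs <;> omega

def e0 (m N n : ℕ) (h : m + (m + N) = n) : (Fin m ⊕ (Fin m ⊕ Fin N)) ≃ Fin n :=
  ((Equiv.sumCongr (Equiv.refl (Fin m)) finSumFinEquiv).trans finSumFinEquiv).trans (finCongr h)

@[simp] lemma e0_inl (m N n : ℕ) (h : m + (m + N) = n) (i : Fin m) :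
    ((e0 m N n h (Sum.inl i)) : ℕ) = (i : ℕ) := by
  simp [e0]

@[simp] lemma e0_inrl (m N n : ℕ) (h : m + (m + N) = n) (i : Fin m) :
    ((e0 m N n h (Sum.inr (Sum.inl i))) : ℕ) = m + (i : ℕ) := by
  simp [e0]

@[simp] lemma e0_inrr (m N n : ℕ) (h : m + (m + N) = n) (i : Fin N) :
    ((e0 m N n h (Sum.inr (Sum.inr i))) : ℕ) = m + (m + (i : ℕ)) := by
  simp [e0]

def BigE (m N n : ℕ) (h : m + (m + N) = n) :
    ((Fin m → Bool) × ((Fin m → Bool) × (Fin N → Bool))) ≃ (Fin n → Bool) :=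
  ((Equiv.prodCongr (Equiv.refl _) (Equiv.sumArrowEquivProdArrow (Fin m) (Fin N) Bool).symm).trans
    ((Equiv.sumArrowEquivProdArrow (Fin m) (Fin m ⊕ Fin N) Bool).symm)).trans
    (Equiv.arrowCongr (e0 m N n h) (Equiv.refl Bool))

lemma BigE_apply (m N n : ℕ) (h : m + (m + N) = n) (a b : Fin m → Bool) (c : Fin N → Bool)
    (s : Fin m ⊕ (Fin m ⊕ Fin N)) :
    BigE m N n h (a, (b, c)) (e0 m N n h s) = Sum.elim a (Sum.elim b c) s := by
  simp [BigE, Equiv.sumArrowEquivProdArrow, Equiv.arrowCongr]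

lemma Xc_one_glue (m N n : ℕ) (h : m + (m + N) = n) (a b : Fin m → Bool) (c : Fin N → Bool) :
    Xc n m 1 (BigE m N n h (a, (b, c))) = cnt a := by
  unfold Xc cvFold cnt
  rw [filter_filter, Finset.card_filter, Finset.card_filter,
    ← Equiv.sum_comp (e0 m N n h), Fintype.sum_sum_type, Fintype.sum_sum_type]
  simp only [BigE_apply, Sum.elim_inl, Sum.elim_inr, e0_inl, e0_inrl, e0_inrr]
  have A : (∑ i : Fin m, if ((1-1)*m ≤ (i:ℕ) ∧ (i:ℕ) < 1*m) ∧ a i = true then 1 else 0)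
      = ∑ i : Fin m, if a i = true then 1 else 0 :=
    Finset.sum_congr rfl fun i _ => by
      have := i.isLt; split_ifs <;> simp_all
  have B : (∑ i : Fin m, if ((1-1)*m ≤ m + (i:ℕ) ∧ m + (i:ℕ) < 1*m) ∧ b i = true then 1 else 0) = 0 :=
    Finset.sum_eq_zero fun i _ => by split_ifs <;> simp_all
  have C : (∑ i : Fin N, if ((1-1)*m ≤ m + (m + (i:ℕ)) ∧ m + (m + (i:ℕ)) < 1*m) ∧ c i = true then 1 else 0) = 0 :=
    Finset.sum_eq_zero fun i _ => by
      split_ifs with hh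
      · exact absurd hh.1 (by omega)
      · rfl
  omega

lemma Xc_two_glue (m N n : ℕ) (h : m + (m + N) = n) (a b : Fin m → Bool) (c : Fin N → Bool) :
    Xc n m 2 (BigE m N n h (a, (b, c))) = cnt b := by
  unfold Xc cvFold cnt
  rw [filter_filter, Finset.card_filter, Finset.card_filter,
    ← Equiv.sum_comp (e0 m N n h), Fintype.sum_sum_type, Fintype.sum_sum_type]
  simp only [BigE_apply, Sum.elim_inl, Sum.elim_inr, e0_inl, e0_inrl, e0_inrr]
  have A : (∑ i : Fin m, if ((2-1)*m ≤ (i:ℕ) ∧ (i:ℕ) < 2*m) ∧ a i = true then 1 else 0) = 0 :=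
    Finset.sum_eq_zero fun i _ => by
      have := i.isLt; split_ifs <;> simp_all <;> omega
  have B : (∑ i : Fin m, if ((2-1)*m ≤ m + (i:ℕ) ∧ m + (i:ℕ) < 2*m) ∧ b i = true then 1 else 0)
      = ∑ i : Fin m, if b i = true then 1 else 0 :=
    Finset.sum_congr rfl fun i _ => by
      have := i.isLt; split_ifs <;> simp_all <;> omega
  have C : (∑ i : Fin N, if ((2-1)*m ≤ m + (m + (i:ℕ)) ∧ m + (m + (i:ℕ)) < 2*m) ∧ c i = true then 1 else 0) = 0 :=
    Finset.sum_eq_zero fun i _ => by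
      split_ifs with hh
      · exact absurd hh.1 (by omega)
      · rfl
  omega

lemma Zc_glue (m N n : ℕ) (h : m + (m + N) = n) (a b : Fin m → Bool) (c : Fin N → Bool) :
    Zc n m (BigE m N n h (a, (b, c))) = cnt c := by
  unfold Zc cnt
  rw [Finset.card_filter, Finset.card_filter,
    ← Equiv.sum_comp (e0 m N n h), Fintype.sum_sum_type, Fintype.sum_sum_type]
  simp only [BigE_apply, Sum.elim_inl, Sum.elim_inr, e0_inl, e0_inrl, e0_inrr]
  have A : (∑ i : Fin m, if 2*m ≤ (i:ℕ) ∧ a i = true then 1 else 0) = 0 :=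
    Finset.sum_eq_zero fun i _ => by
      have := i.isLt; split_ifs <;> simp_all <;> omega
  have B : (∑ i : Fin m, if 2*m ≤ m + (i:ℕ) ∧ b i = true then 1 else 0) = 0 :=
    Finset.sum_eq_zero fun i _ => by
      have := i.isLt; split_ifs <;> simp_all <;> omega
  have C : (∑ i : Fin N, if 2*m ≤ m + (m + (i:ℕ)) ∧ c i = true then 1 else 0)
      = ∑ i : Fin N, if c i = true then 1 else 0 :=
    Finset.sum_congr rfl fun i _ => by split_ifs <;> simp_all <;> omega
  omega

def fsEquiv (m : ℕ) : Finset (Fin m) ≃ (Fin m → Bool) where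
  toFun s := fun i => decide (i ∈ s)
  invFun a := Finset.univ.filter fun i => a i = true
  left_inv s := by ext i; simp
  right_inv a := by funext i; simp

lemma cnt_fsEquiv (m : ℕ) (s : Finset (Fin m)) : cnt (fsEquiv m s) = s.card := by
  unfold cnt fsEquiv
  congr 1
  ext i; simp

lemma sum_cnt (m : ℕ) (F : ℕ → ℝ) :
    ∑ a : Fin m → Bool, F (cnt a) = ∑ x ∈ range (m + 1), (m.choose x : ℝ) * F x := by
  rw [← Equiv.sum_comp (fsEquiv m) (fun a => F (cnt a))]
  simp only [Function.comp, cnt_fsEquiv]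
  rw [← Finset.powerset_univ, Finset.sum_powerset_apply_card]
  simp [Finset.card_univ, nsmul_eq_mul]

lemma sum_W (m : ℕ) : ∑ x ∈ range (m + 1), W m x = 1 := by
  unfold W
  rw [← Finset.mul_sum]
  rw [show ∑ x ∈ range (m + 1), (m.choose x : ℝ) = ((∑ x ∈ range (m + 1), m.choose x : ℕ) : ℝ) by push_cast; ring]
  rw [Nat.sum_range_choose]
  push_cast
  rw [inv_pow, inv_mul_cancel₀ (by positivity)]

lemma nat_sum_mul_choose (m : ℕ) : 2 * ∑ x ∈ range (m + 1), x * m.choose x = m * 2 ^ m := by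
  have h1 : ∑ x ∈ range (m + 1), (m - x) * m.choose (m - x) = ∑ x ∈ range (m + 1), x * m.choose x :=
    Finset.sum_range_reflect (fun x => x * m.choose x) (m + 1)
  have h2 : ∀ x ∈ range (m + 1), (m - x) * m.choose (m - x) = (m - x) * m.choose x := by
    intro x hx
    rw [Nat.choose_symm (by simpa using Nat.lt_succ_iff.mp (mem_range.mp hx))]
  calc 2 * ∑ x ∈ range (m + 1), x * m.choose x
      = (∑ x ∈ range (m + 1), x * m.choose x) + ∑ x ∈ range (m + 1), (m - x) * m.choose (m - x) := by
        rw [h1]; ring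
    _ = (∑ x ∈ range (m + 1), x * m.choose x) + ∑ x ∈ range (m + 1), (m - x) * m.choose x := by
        rw [Finset.sum_congr rfl h2]
    _ = ∑ x ∈ range (m + 1), m * m.choose x := by
        rw [← Finset.sum_add_distrib]
        refine Finset.sum_congr rfl fun x hx => ?_
        have := Nat.lt_succ_iff.mp (mem_range.mp hx)
        rw [← Nat.add_mul]
        congr 1
        omega
    _ = m * 2 ^ m := by rw [← Finset.mul_sum, Nat.sum_range_choose]

lemma sum_WA (m : ℕ) (hm : m ≠ 0) :
    ∑ x ∈ range (m + 1), W m x * ((x : ℝ) / m) = 1 / 2 := by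
  unfold W
  have key : ∑ x ∈ range (m + 1), (m.choose x : ℝ) * x = m * 2 ^ m / 2 := by
    have h := nat_sum_mul_choose m
    have this : (2:ℝ) * ∑ x ∈ range (m + 1), (x:ℝ) * (m.choose x : ℝ) = (m:ℝ) * 2 ^ m := by
      exact_mod_cast h
    rw [Finset.sum_congr rfl fun x _ => mul_comm ((m.choose x : ℝ)) (x : ℝ)]
    linarith
  calc ∑ x ∈ range (m + 1), (2:ℝ)⁻¹ ^ m * (m.choose x : ℝ) * ((x:ℝ) / m)
      = (2:ℝ)⁻¹ ^ m / m * ∑ x ∈ range (m + 1), (m.choose x : ℝ) * x := by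
        rw [Finset.mul_sum]; exact Finset.sum_congr rfl fun x _ => by ring
    _ = 1 / 2 := by
        rw [key, inv_pow]
        field_simp

lemma expec_count (m N n : ℕ) (h : m + (m + N) = n) (F' : ℕ → ℕ → ℕ → ℝ) :
    expec n (fun ω => F' (Xc n m 1 ω) (Xc n m 2 ω) (Zc n m ω))
    = ∑ z ∈ range (N + 1), ∑ x1 ∈ range (m + 1), ∑ x2 ∈ range (m + 1),
        W N z * (W m x1 * (W m x2 * F' x1 x2 z)) := by
  unfold expec
  rw [← Equiv.sum_comp (BigE m N n h) (fun ω => F' (Xc n m 1 ω) (Xc n m 2 ω) (Zc n m ω))]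
  rw [Fintype.sum_prod_type]
  simp only [Fintype.sum_prod_type, Function.comp]
  simp only [Xc_one_glue, Xc_two_glue, Zc_glue]
  have s3 : ∀ (a b : Fin m → Bool), ∑ c : Fin N → Bool, F' (cnt a) (cnt b) (cnt c)
      = ∑ z ∈ range (N + 1), (N.choose z : ℝ) * F' (cnt a) (cnt b) z :=
    fun a b => sum_cnt N _
  simp only [s3]
  have s2 : ∀ (a : Fin m → Bool), (∑ b : Fin m → Bool,
        ∑ z ∈ range (N + 1), (N.choose z : ℝ) * F' (cnt a) (cnt b) z)
      = ∑ x2 ∈ range (m + 1), (m.choose x2 : ℝ) *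
          ∑ z ∈ range (N + 1), (N.choose z : ℝ) * F' (cnt a) x2 z :=
    fun a => sum_cnt m (fun y => ∑ z ∈ range (N + 1), (N.choose z : ℝ) * F' (cnt a) y z)
  simp only [s2]
  rw [sum_cnt m (fun y => ∑ x2 ∈ range (m + 1), (m.choose x2 : ℝ) *
        ∑ z ∈ range (N + 1), (N.choose z : ℝ) * F' y x2 z)]
  have hpow : (2 : ℝ) ^ n = 2 ^ m * 2 ^ m * 2 ^ N := by
    rw [← h, pow_add, pow_add]; ring
  have T1 : (∑ x1 ∈ range (m + 1), (m.choose x1 : ℝ) * ∑ x2 ∈ range (m + 1), (m.choose x2 : ℝ) *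
        ∑ z ∈ range (N + 1), (N.choose z : ℝ) * F' x1 x2 z) / 2 ^ n
      = ∑ x1 ∈ range (m + 1), ∑ x2 ∈ range (m + 1), ∑ z ∈ range (N + 1),
          W N z * (W m x1 * (W m x2 * F' x1 x2 z)) := by
    rw [Finset.sum_div]
    refine Finset.sum_congr rfl fun x1 _ => ?_
    rw [Finset.mul_sum, Finset.sum_div]
    refine Finset.sum_congr rfl fun x2 _ => ?_
    rw [Finset.mul_sum, Finset.mul_sum, Finset.sum_div]
    refine Finset.sum_congr rfl fun z _ => ?_
    unfold W
    rw [hpow]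
    simp only [inv_pow]
    field_simp
  rw [T1]
  rw [Finset.sum_congr rfl fun x1 _ => Finset.sum_comm]
  rw [Finset.sum_comm]

lemma alg_abstract (s tN : Finset ℕ) (w v a : ℕ → ℝ) (g : ℕ → ℕ → ℝ)
    (hw : ∑ x ∈ s, w x = 1) (ha : ∑ x ∈ s, w x * a x = 1 / 2)
    (hv : ∑ z ∈ tN, v z = 1) :
    (∑ z ∈ tN, v z * ∑ x1 ∈ s, ∑ x2 ∈ s, w x1 * w x2 *
        ((a x1 + (1 - 2 * a x1) * g z x2) * (a x2 + (1 - 2 * a x2) * g z x1)))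
      - (∑ z ∈ tN, v z * ∑ x1 ∈ s, ∑ x2 ∈ s, w x1 * w x2 *
          (a x1 + (1 - 2 * a x1) * g z x2))
        * (∑ z ∈ tN, v z * ∑ x1 ∈ s, ∑ x2 ∈ s, w x1 * w x2 *
            (a x2 + (1 - 2 * a x2) * g z x1))
      = 4 * ∑ z ∈ tN, v z *
          ((∑ x ∈ s, w x * a x * g z x)
            - (∑ x ∈ s, w x * a x) * (∑ x ∈ s, w x * g z x)) ^ 2 := by
  have hb : ∑ x ∈ s, w x * (1 - 2 * a x) = 0 := by
    calc ∑ x ∈ s, w x * (1 - 2 * a x) = ∑ x ∈ s, (w x - 2 * (w x * a x)) :=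
          Finset.sum_congr rfl fun x _ => by ring
      _ = (∑ x ∈ s, w x) - 2 * ∑ x ∈ s, w x * a x := by
          rw [Finset.sum_sub_distrib, Finset.mul_sum]
      _ = 0 := by rw [hw, ha]; norm_num
  have hbg : ∀ z, ∑ x ∈ s, w x * ((1 - 2 * a x) * g z x)
      = (∑ x ∈ s, w x * g z x) - 2 * ∑ x ∈ s, w x * a x * g z x := by
    intro z
    calc ∑ x ∈ s, w x * ((1 - 2 * a x) * g z x)
        = ∑ x ∈ s, (w x * g z x - 2 * (w x * a x * g z x)) :=
          Finset.sum_congr rfl fun x _ => by ring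
      _ = _ := by rw [Finset.sum_sub_distrib, Finset.mul_sum]
  have hkey : ∀ z, (∑ x1 ∈ s, ∑ x2 ∈ s, w x1 * w x2 *
        ((a x1 + (1 - 2 * a x1) * g z x2) * (a x2 + (1 - 2 * a x2) * g z x1)))
      = 1 / 4 + ((∑ x ∈ s, w x * g z x) - 2 * ∑ x ∈ s, w x * a x * g z x) ^ 2 := by
    intro z
    calc (∑ x1 ∈ s, ∑ x2 ∈ s, w x1 * w x2 *
          ((a x1 + (1 - 2 * a x1) * g z x2) * (a x2 + (1 - 2 * a x2) * g z x1)))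
        = ∑ x1 ∈ s, ∑ x2 ∈ s,
            ((w x1 * a x1) * (w x2 * a x2)
              + (w x1 * (a x1 * g z x1)) * (w x2 * (1 - 2 * a x2))
              + (w x1 * (1 - 2 * a x1)) * (w x2 * (a x2 * g z x2))
              + (w x1 * ((1 - 2 * a x1) * g z x1)) * (w x2 * ((1 - 2 * a x2) * g z x2))) := by
          refine Finset.sum_congr rfl fun x1 _ => Finset.sum_congr rfl fun x2 _ => by ring
      _ = (∑ x1 ∈ s, ∑ x2 ∈ s, (w x1 * a x1) * (w x2 * a x2))
            + (∑ x1 ∈ s, ∑ x2 ∈ s, (w x1 * (a x1 * g z x1)) * (w x2 * (1 - 2 * a x2)))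
            + (∑ x1 ∈ s, ∑ x2 ∈ s, (w x1 * (1 - 2 * a x1)) * (w x2 * (a x2 * g z x2)))
            + ∑ x1 ∈ s, ∑ x2 ∈ s, (w x1 * ((1 - 2 * a x1) * g z x1)) * (w x2 * ((1 - 2 * a x2) * g z x2)) := by
          simp only [Finset.sum_add_distrib]
      _ = (∑ x ∈ s, w x * a x) * (∑ x ∈ s, w x * a x)
            + (∑ x ∈ s, w x * (a x * g z x)) * (∑ x ∈ s, w x * (1 - 2 * a x))
            + (∑ x ∈ s, w x * (1 - 2 * a x)) * (∑ x ∈ s, w x * (a x * g z x))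
            + (∑ x ∈ s, w x * ((1 - 2 * a x) * g z x)) * (∑ x ∈ s, w x * ((1 - 2 * a x) * g z x)) := by
          rw [← Finset.sum_mul_sum, ← Finset.sum_mul_sum, ← Finset.sum_mul_sum, ← Finset.sum_mul_sum]
      _ = 1 / 4 + ((∑ x ∈ s, w x * g z x) - 2 * ∑ x ∈ s, w x * a x * g z x) ^ 2 := by
          rw [ha, hb, hbg z]
          ring
  have h1 : ∀ z, (∑ x1 ∈ s, ∑ x2 ∈ s, w x1 * w x2 * (a x1 + (1 - 2 * a x1) * g z x2))
      = 1 / 2 := by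
    intro z
    calc (∑ x1 ∈ s, ∑ x2 ∈ s, w x1 * w x2 * (a x1 + (1 - 2 * a x1) * g z x2))
        = ∑ x1 ∈ s, ∑ x2 ∈ s, ((w x1 * a x1) * w x2 + (w x1 * (1 - 2 * a x1)) * (w x2 * g z x2)) := by
          refine Finset.sum_congr rfl fun x1 _ => Finset.sum_congr rfl fun x2 _ => by ring
      _ = (∑ x1 ∈ s, ∑ x2 ∈ s, (w x1 * a x1) * w x2)
            + ∑ x1 ∈ s, ∑ x2 ∈ s, (w x1 * (1 - 2 * a x1)) * (w x2 * g z x2) := by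
          simp only [Finset.sum_add_distrib]
      _ = (∑ x ∈ s, w x * a x) * (∑ x ∈ s, w x)
            + (∑ x ∈ s, w x * (1 - 2 * a x)) * (∑ x ∈ s, w x * g z x) := by
          rw [← Finset.sum_mul_sum, ← Finset.sum_mul_sum]
      _ = 1 / 2 := by rw [ha, hb, hw]; ring
  have h2 : ∀ z, (∑ x1 ∈ s, ∑ x2 ∈ s, w x1 * w x2 * (a x2 + (1 - 2 * a x2) * g z x1))
      = 1 / 2 := by
    intro z
    calc (∑ x1 ∈ s, ∑ x2 ∈ s, w x1 * w x2 * (a x2 + (1 - 2 * a x2) * g z x1))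
        = ∑ x1 ∈ s, ∑ x2 ∈ s, (w x1 * (w x2 * a x2) + (w x1 * g z x1) * (w x2 * (1 - 2 * a x2))) := by
          refine Finset.sum_congr rfl fun x1 _ => Finset.sum_congr rfl fun x2 _ => by ring
      _ = (∑ x1 ∈ s, ∑ x2 ∈ s, w x1 * (w x2 * a x2))
            + ∑ x1 ∈ s, ∑ x2 ∈ s, (w x1 * g z x1) * (w x2 * (1 - 2 * a x2)) := by
          simp only [Finset.sum_add_distrib]
      _ = (∑ x ∈ s, w x) * (∑ x ∈ s, w x * a x)
            + (∑ x ∈ s, w x * g z x) * (∑ x ∈ s, w x * (1 - 2 * a x)) := by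
          rw [← Finset.sum_mul_sum, ← Finset.sum_mul_sum]
      _ = 1 / 2 := by rw [ha, hb, hw]; ring
  simp only [hkey, h1, h2]
  have hL : ∑ z ∈ tN, v z * (1 / 4 + ((∑ x ∈ s, w x * g z x) - 2 * ∑ x ∈ s, w x * a x * g z x) ^ 2)
      = 1 / 4 + ∑ z ∈ tN, v z * ((∑ x ∈ s, w x * g z x) - 2 * ∑ x ∈ s, w x * a x * g z x) ^ 2 := by
    calc ∑ z ∈ tN, v z * (1 / 4 + ((∑ x ∈ s, w x * g z x) - 2 * ∑ x ∈ s, w x * a x * g z x) ^ 2)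
        = ∑ z ∈ tN, (v z * (1 / 4) + v z * ((∑ x ∈ s, w x * g z x) - 2 * ∑ x ∈ s, w x * a x * g z x) ^ 2) :=
          Finset.sum_congr rfl fun z _ => by ring
      _ = (∑ z ∈ tN, v z * (1 / 4)) + ∑ z ∈ tN, v z * ((∑ x ∈ s, w x * g z x) - 2 * ∑ x ∈ s, w x * a x * g z x) ^ 2 := by
          simp only [Finset.sum_add_distrib]
      _ = _ := by
          rw [← Finset.sum_mul, hv]; ring
  have hv2 : ∑ z ∈ tN, v z * (1 / 2) = 1 / 2 := by rw [← Finset.sum_mul, hv]; ring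
  have this2 : ∑ z ∈ tN, v z * ((∑ x ∈ s, w x * g z x) - 2 * ∑ x ∈ s, w x * a x * g z x) ^ 2
      = ∑ z ∈ tN, 4 * (v z * ((∑ x ∈ s, w x * a x * g z x) - 1 / 2 * ∑ x ∈ s, w x * g z x) ^ 2) :=
    Finset.sum_congr rfl fun z _ => by ring
  rw [hL, hv2, this2, ← Finset.mul_sum, ha]
  ring

lemma f_decomp (m : ℕ) (hm : m ≠ 0) (t : ℝ) (x y z : ℕ) :
    ff m t x (y + z) = (x:ℝ)/m + (1 - 2*((x:ℝ)/m)) * (if t - (z:ℝ) < (y:ℝ) then (1:ℝ) else 0) := by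
  unfold ff
  have hyz : ((y + z : ℕ) : ℝ) = (y:ℝ) + z := by push_cast; ring
  by_cases h1 : t - (z:ℝ) < (y:ℝ)
  · rw [if_pos h1, if_pos (by rw [hyz]; linarith)]
    have hm' : (m:ℝ) ≠ 0 := Nat.cast_ne_zero.mpr hm
    field_simp
    ring
  · rw [if_neg h1, if_neg (by rw [hyz]; intro hcon; exact h1 (by linarith))]
    ring

theorem majority_fold_covariance_conditional
    (n k : ℕ) (hn : 2 ≤ n) (hk : 2 ≤ k) (hkn : k ∣ n) (m : ℕ) (hm : m = n / k) :
    expec n (fun ω => Lhat n m 1 ω * Lhat n m 2 ω)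
        - expec n (Lhat n m 1) * expec n (Lhat n m 2)
      = 4 * ∑ y ∈ Finset.range (n - 2 * m + 1),
          (2 : ℝ)⁻¹ ^ (n - 2 * m) * ((n - 2 * m).choose y : ℝ) *
          ((∑ x ∈ Finset.range (m + 1),
              (2 : ℝ)⁻¹ ^ m * (m.choose x : ℝ) * ((x : ℝ) / m) *
                (if ((n : ℝ) - m) / 2 - y < (x : ℝ) then (1 : ℝ) else 0))
            - (∑ x ∈ Finset.range (m + 1),
                (2 : ℝ)⁻¹ ^ m * (m.choose x : ℝ) * ((x : ℝ) / m))
              * (∑ x ∈ Finset.range (m + 1),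
                  (2 : ℝ)⁻¹ ^ m * (m.choose x : ℝ) *
                    (if ((n : ℝ) - m) / 2 - y < (x : ℝ) then (1 : ℝ) else 0))) ^ 2 := by
  have hnk : n = k * m := by
    rw [hm, Nat.mul_div_cancel' hkn]
  have hm0 : m ≠ 0 := by
    rintro rfl
    omega
  have h2m : 2 * m ≤ n := by
    rw [hnk]
    have : 1 ≤ m := Nat.one_le_iff_ne_zero.mpr hm0
    nlinarith
  have h : m + (m + (n - 2 * m)) = n := by omega
  have hL1 : Lhat n m 1 = fun ω => (fun x1 x2 z => ff m (((n : ℝ) - m) / 2) x1 (x2 + z))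
      (Xc n m 1 ω) (Xc n m 2 ω) (Zc n m ω) := by
    funext ω
    rw [Lhat_eq, Yc_one]
  have hL2 : Lhat n m 2 = fun ω => (fun x1 x2 z => ff m (((n : ℝ) - m) / 2) x2 (x1 + z))
      (Xc n m 1 ω) (Xc n m 2 ω) (Zc n m ω) := by
    funext ω
    rw [Lhat_eq, Yc_two]
  have hLp : (fun ω => Lhat n m 1 ω * Lhat n m 2 ω) = fun ω =>
      (fun x1 x2 z => ff m (((n : ℝ) - m) / 2) x1 (x2 + z) * ff m (((n : ℝ) - m) / 2) x2 (x1 + z))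
      (Xc n m 1 ω) (Xc n m 2 ω) (Zc n m ω) := by
    funext ω
    rw [Lhat_eq, Lhat_eq, Yc_one, Yc_two]
  -- abbreviations
  set T : ℝ := ((n : ℝ) - m) / 2 with hT
  set N : ℕ := n - 2 * m with hN
  have E1 : expec n (Lhat n m 1)
      = ∑ z ∈ range (N + 1), W N z * ∑ x1 ∈ range (m + 1), ∑ x2 ∈ range (m + 1),
          W m x1 * W m x2 * (((x1:ℝ)/m + (1 - 2*((x1:ℝ)/m)) * (if T - (z:ℝ) < (x2:ℝ) then (1:ℝ) else 0))) := by
    rw [hL1]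
    refine (expec_count m N n h (fun x1 x2 z => ff m T x1 (x2 + z))).trans ?_
    refine Finset.sum_congr rfl fun z _ => ?_
    have pt : ∀ x1 x2 : ℕ, W N z * (W m x1 * (W m x2 * ff m T x1 (x2 + z)))
        = W N z * (W m x1 * W m x2 * (((x1:ℝ)/m + (1 - 2*((x1:ℝ)/m)) * (if T - (z:ℝ) < (x2:ℝ) then (1:ℝ) else 0)))) :=
      fun x1 x2 => by rw [f_decomp m hm0]; ring
    refine (Finset.sum_congr rfl fun x1 _ => Finset.sum_congr rfl fun x2 _ => pt x1 x2).trans ?_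
    simp only [← Finset.mul_sum]
  have E2 : expec n (Lhat n m 2)
      = ∑ z ∈ range (N + 1), W N z * ∑ x1 ∈ range (m + 1), ∑ x2 ∈ range (m + 1),
          W m x1 * W m x2 * (((x2:ℝ)/m + (1 - 2*((x2:ℝ)/m)) * (if T - (z:ℝ) < (x1:ℝ) then (1:ℝ) else 0))) := by
    rw [hL2]
    refine (expec_count m N n h (fun x1 x2 z => ff m T x2 (x1 + z))).trans ?_
    refine Finset.sum_congr rfl fun z _ => ?_
    have pt : ∀ x1 x2 : ℕ, W N z * (W m x1 * (W m x2 * ff m T x2 (x1 + z)))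
        = W N z * (W m x1 * W m x2 * (((x2:ℝ)/m + (1 - 2*((x2:ℝ)/m)) * (if T - (z:ℝ) < (x1:ℝ) then (1:ℝ) else 0)))) :=
      fun x1 x2 => by rw [f_decomp m hm0]; ring
    refine (Finset.sum_congr rfl fun x1 _ => Finset.sum_congr rfl fun x2 _ => pt x1 x2).trans ?_
    simp only [← Finset.mul_sum]
  have Ep : expec n (fun ω => Lhat n m 1 ω * Lhat n m 2 ω)
      = ∑ z ∈ range (N + 1), W N z * ∑ x1 ∈ range (m + 1), ∑ x2 ∈ range (m + 1),
          W m x1 * W m x2 *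
            (((x1:ℝ)/m + (1 - 2*((x1:ℝ)/m)) * (if T - (z:ℝ) < (x2:ℝ) then (1:ℝ) else 0))
              * ((x2:ℝ)/m + (1 - 2*((x2:ℝ)/m)) * (if T - (z:ℝ) < (x1:ℝ) then (1:ℝ) else 0))) := by
    rw [hLp]
    refine (expec_count m N n h (fun x1 x2 z => ff m T x1 (x2 + z) * ff m T x2 (x1 + z))).trans ?_
    refine Finset.sum_congr rfl fun z _ => ?_
    have pt : ∀ x1 x2 : ℕ, W N z * (W m x1 * (W m x2 * (ff m T x1 (x2 + z) * ff m T x2 (x1 + z))))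
        = W N z * (W m x1 * W m x2 *
            (((x1:ℝ)/m + (1 - 2*((x1:ℝ)/m)) * (if T - (z:ℝ) < (x2:ℝ) then (1:ℝ) else 0))
              * ((x2:ℝ)/m + (1 - 2*((x2:ℝ)/m)) * (if T - (z:ℝ) < (x1:ℝ) then (1:ℝ) else 0)))) :=
      fun x1 x2 => by rw [f_decomp m hm0, f_decomp m hm0]; ring
    refine (Finset.sum_congr rfl fun x1 _ => Finset.sum_congr rfl fun x2 _ => pt x1 x2).trans ?_
    simp only [← Finset.mul_sum]
  rw [Ep, E1, E2]
  exact alg_abstract (range (m + 1)) (range (N + 1)) (W m) (W N)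
    (fun x => (x : ℝ) / m) (fun z x => if T - (z:ℝ) < (x:ℝ) then (1:ℝ) else 0)
    (sum_W m) (sum_WA m hm0) (sum_W N)
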